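/- For a p-biased random walk with p > 1/2, the last time T the walk visits its bottommost point satisfies the tail bound P(T ≥ t) ≤ (1 + sqrt(2)) (4pq)^{t/2} for every nonnegative integer t, where q = 1-p. -/

import Mathlib

namespace BWAux
noncomputable section
open Classical Finset

def stepVal (b : Bool) : ℤ := if b then 1 else -1
def wt (p q : ℝ) (b : Bool) : ℝ := if b then p else q
def W (p q : ℝ) {N : ℕ} (z : Fin N → Bool) : ℝ := ∏ i, wt p q (z i)
def pps {N : ℕ} (z : Fin N → Bool) (s : ℕ) : ℤ :=
  ∑ i : Fin N, if (i : ℕ) < s then stepVal (z i) else 0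

variable {p q : ℝ}

lemma wt_nonneg (hp : 0 ≤ p) (hq : 0 ≤ q) (b : Bool) : 0 ≤ wt p q b := by
  cases b <;> simp [wt, hp, hq]
lemma W_nonneg (hp : 0 ≤ p) (hq : 0 ≤ q) {N : ℕ} (z : Fin N → Bool) : 0 ≤ W p q z :=
  Finset.prod_nonneg fun i _ => wt_nonneg hp hq _
lemma W_cons {N : ℕ} (b : Bool) (y : Fin N → Bool) :
    W p q (Fin.cons b y) = wt p q b * W p q y := by
  simp [W, Fin.prod_univ_succ]
lemma pps_zero {N : ℕ} (z : Fin N → Bool) : pps z 0 = 0 := by simp [pps]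
lemma pps_cons_succ {N : ℕ} (b : Bool) (y : Fin N → Bool) (m : ℕ) :
    pps (Fin.cons b y) (m + 1) = stepVal b + pps y m := by
  rw [pps, Fin.sum_univ_succ]
  simp [pps, Nat.succ_lt_succ_iff]
lemma sum_succ {N : ℕ} (f : (Fin (N + 1) → Bool) → ℝ) :
    ∑ z : Fin (N + 1) → Bool, f z = ∑ b : Bool, ∑ y : Fin N → Bool, f (Fin.cons b y) := by
  rw [← Equiv.sum_comp (Fin.consEquiv (fun _ : Fin (N + 1) => Bool)) f, Fintype.sum_prod_type]
  rfl
lemma sum_W (hpq : p + q = 1) : ∀ N : ℕ, ∑ z : Fin N → Bool, W p q z = 1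
  | 0 => by simp [W]
  | (N + 1) => by
    rw [sum_succ]
    simp only [W_cons, ← Finset.mul_sum, sum_W hpq N]
    simp [wt, Fintype.sum_bool, hpq]

lemma ite_le_W (hp : 0 ≤ p) (hq : 0 ≤ q) {N : ℕ} (P : Prop) [Decidable P] (z : Fin N → Bool) :
    (if P then W p q z else 0) ≤ W p q z := by
  split
  · exact le_rfl
  · exact W_nonneg hp hq z

lemma comb1 (hp : 0 < p) (hq : 0 ≤ q) (hpq : p + q = 1) :
    ∀ (M j : ℕ),
      (∑ z : Fin M → Bool, if (∃ m, m ≤ M ∧ pps z m ≤ -(j : ℤ)) then W p q z else 0)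
        ≤ (q / p) ^ j := by
  have hr0 : 0 ≤ q / p := div_nonneg hq hp.le
  intro M
  induction M with
  | zero =>
    intro j
    cases j with
    | zero =>
      have : ∀ z : Fin 0 → Bool, (∃ m, m ≤ 0 ∧ pps z m ≤ -((0:ℕ) : ℤ)) := by
        intro z; exact ⟨0, le_refl _, by simp [pps_zero]⟩
      simp only [this, if_true]
      simp [W]
    | succ j =>
      have : ∀ z : Fin 0 → Bool, ¬(∃ m, m ≤ 0 ∧ pps z m ≤ -((j+1:ℕ) : ℤ)) := by
        rintro z ⟨m, hm, hle⟩
        interval_cases m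
        rw [pps_zero] at hle
        omega
      simp only [this, if_false]
      simp
      positivity
  | succ M ih =>
    intro j
    cases j with
    | zero =>
      calc (∑ z : Fin (M+1) → Bool, if (∃ m, m ≤ M+1 ∧ pps z m ≤ -((0:ℕ) : ℤ)) then W p q z else 0)
          ≤ ∑ z : Fin (M+1) → Bool, W p q z :=
            Finset.sum_le_sum fun z _ => ite_le_W hp.le hq _ z
        _ = 1 := sum_W hpq _
        _ = (q/p)^0 := by simp
    | succ j =>
      have key : ∀ (b : Bool) (y : Fin M → Bool),
          (∃ m, m ≤ M + 1 ∧ pps (Fin.cons b y) m ≤ -((j+1:ℕ) : ℤ)) ↔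
          (∃ m, m ≤ M ∧ pps y m ≤ -((j+1:ℕ) : ℤ) - stepVal b) := by
        intro b y
        constructor
        · rintro ⟨m, hm, hle⟩
          cases m with
          | zero => rw [pps_zero] at hle; omega
          | succ m =>
            rw [pps_cons_succ] at hle
            exact ⟨m, by omega, by omega⟩
        · rintro ⟨m, hm, hle⟩
          exact ⟨m + 1, by omega, by rw [pps_cons_succ]; omega⟩
      rw [sum_succ]
      have pull : ∀ (b : Bool) (y : Fin M → Bool) (C : Prop) [Decidable C],
          (if C then wt p q b * W p q y else 0) = wt p q b * (if C then W p q y else 0) := by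
        intro b y C _; split <;> simp
      simp only [key, W_cons, pull, ← Finset.mul_sum]
      rw [Fintype.sum_bool]
      have e1 : (-((j+1:ℕ) : ℤ) - stepVal true) = -((j+2:ℕ) : ℤ) := by
        simp [stepVal]; try omega
      have e2 : (-((j+1:ℕ) : ℤ) - stepVal false) = -((j:ℕ) : ℤ) := by
        simp [stepVal]; try omega
      rw [e1, e2]
      have h1 := ih (j+2)
      have h2 := ih j
      have hwt : wt p q true = p ∧ wt p q false = q := by simp [wt]
      rw [hwt.1, hwt.2]
      calc p * (∑ y : Fin M → Bool, if (∃ m, m ≤ M ∧ pps y m ≤ -((j+2:ℕ) : ℤ)) then W p q y else 0)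
            + q * (∑ y : Fin M → Bool, if (∃ m, m ≤ M ∧ pps y m ≤ -((j:ℕ) : ℤ)) then W p q y else 0)
          ≤ p * (q/p)^(j+2) + q * (q/p)^j := by
            have t1 := mul_le_mul_of_nonneg_left h1 hp.le
            have t2 := mul_le_mul_of_nonneg_left h2 hq
            linarith
        _ = (q/p)^(j+1) := by
            have hr : p * (q/p)^(j+2) + q * (q/p)^j = (q/p)^j * (p * (q/p)^2 + q) := by ring
            have h2 : p * (q/p)^2 + q = q/p := by
              have hpq' : p * (q/p) = q := by field_simp
              linear_combination (q/p)*hpq' + (q/p)*hpq - hpq'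
            rw [hr, h2, pow_succ]

lemma pps_self {t : ℕ} (y : Fin t → Bool) : pps y t = ∑ i, stepVal (y i) := by
  unfold pps
  exact Finset.sum_congr rfl fun i _ => if_pos i.isLt

lemma comb3 (sq : ℝ) (hsq : 0 < sq) :
    ∀ t : ℕ, (∑ y : Fin t → Bool, W p q y * sq ^ (pps y t)) = (p * sq + q * sq⁻¹) ^ t
  | 0 => by simp [W, pps]
  | (t + 1) => by
    rw [sum_succ]
    have reorg : ∀ (b : Bool) (y : Fin t → Bool),
        W p q (Fin.cons b y) * sq ^ (pps (Fin.cons b y) (t + 1)) =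
          (wt p q b * sq ^ (stepVal b)) * (W p q y * sq ^ (pps y t)) := by
      intro b y
      rw [W_cons, pps_cons_succ, zpow_add₀ hsq.ne']
      ring
    simp only [reorg, ← Finset.mul_sum, comb3 sq hsq t]
    rw [Fintype.sum_bool]
    have : wt p q true * sq ^ (stepVal true) + wt p q false * sq ^ (stepVal false)
        = p * sq + q * sq⁻¹ := by
      simp [wt, stepVal]
    rw [pow_succ]
    linear_combination (p * sq + q * sq⁻¹) ^ t * this

lemma W_append {t M : ℕ} (y : Fin t → Bool) (w : Fin M → Bool) :
    W p q (Fin.append y w) = W p q y * W p q w := by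
  unfold W
  rw [Fin.prod_univ_add]
  congr 1
  · exact Finset.prod_congr rfl fun i _ => by rw [Fin.append_left]
  · exact Finset.prod_congr rfl fun i _ => by rw [Fin.append_right]

lemma pps_append {t M : ℕ} (y : Fin t → Bool) (w : Fin M → Bool) (m : ℕ) :
    pps (Fin.append y w) (t + m) = pps y t + pps w m := by
  unfold pps
  rw [Fin.sum_univ_add]
  congr 1
  · apply Finset.sum_congr rfl
    intro i _
    rw [Fin.append_left]
    have h1 : ((Fin.castAdd M i : Fin (t + M)) : ℕ) = (i : ℕ) := rfl
    rw [h1, if_pos (by omega : (i:ℕ) < t + m), if_pos i.isLt]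
  · apply Finset.sum_congr rfl
    intro i _
    rw [Fin.append_right]
    have h1 : ((Fin.natAdd t i : Fin (t + M)) : ℕ) = t + (i : ℕ) := rfl
    rw [h1]
    by_cases h : (i : ℕ) < m
    · rw [if_pos (by omega), if_pos h]
    · rw [if_neg (by omega), if_neg h]

lemma mainComb (hp : 0 < p) (hq : 0 ≤ q) (hpq : p + q = 1) (sq : ℝ) (hsq : 0 < sq)
    (hsq1 : sq ≤ 1) (hr : q / p = sq * sq) (t M : ℕ) :
    (∑ z : Fin (t + M) → Bool, if (∃ s, t ≤ s ∧ s ≤ t + M ∧ pps z s ≤ 0) then W p q z else 0)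
      ≤ (p * sq + q * sq⁻¹) ^ t := by
  rw [← Equiv.sum_comp (Fin.appendEquiv (α := Bool) t M)
    (fun z => if (∃ s, t ≤ s ∧ s ≤ t + M ∧ pps z s ≤ 0) then W p q z else 0),
    Fintype.sum_prod_type]
  have key : ∀ (y : Fin t → Bool) (w : Fin M → Bool),
      ((∃ s, t ≤ s ∧ s ≤ t + M ∧ pps (Fin.append y w) s ≤ 0) ↔
        (∃ m, m ≤ M ∧ pps w m ≤ -(pps y t))) := by
    intro y w
    constructor
    · rintro ⟨s, h1, h2, h3⟩
      refine ⟨s - t, by omega, ?_⟩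
      have hs : s = t + (s - t) := by omega
      rw [hs, pps_append] at h3
      omega
    · rintro ⟨m, h1, h2⟩
      exact ⟨t + m, by omega, by omega, by rw [pps_append]; omega⟩
  have pull : ∀ (y : Fin t → Bool) (w : Fin M → Bool) (C : Prop) [Decidable C],
      (if C then W p q y * W p q w else 0) = W p q y * (if C then W p q w else 0) := by
    intro y w C _; split <;> simp
  have happ : ∀ (x : (Fin t → Bool) × (Fin M → Bool)),
      (Fin.appendEquiv (α := Bool) t M) x = Fin.append x.1 x.2 := fun _ => rfl
  simp only [happ, key, W_append, pull, ← Finset.mul_sum]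
  have inner_le : ∀ y : Fin t → Bool,
      (∑ w : Fin M → Bool, if (∃ m, m ≤ M ∧ pps w m ≤ -(pps y t)) then W p q w else 0)
        ≤ sq ^ (pps y t) := by
    intro y
    rcases le_or_gt (pps y t) 0 with hk | hk
    · calc (∑ w : Fin M → Bool, if (∃ m, m ≤ M ∧ pps w m ≤ -(pps y t)) then W p q w else 0)
          ≤ ∑ w : Fin M → Bool, W p q w :=
            Finset.sum_le_sum fun w _ => ite_le_W hp.le hq _ w
        _ = 1 := sum_W hpq M
        _ ≤ sq ^ (pps y t) := by
            have hn : ((-(pps y t)).toNat : ℤ) = -(pps y t) := Int.toNat_of_nonneg (by omega)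
            have : sq ^ (pps y t) = (sq ^ ((-(pps y t)).toNat))⁻¹ := by
              rw [← zpow_natCast, hn, zpow_neg, inv_inv]
            rw [this]
            exact (one_le_inv₀ (pow_pos hsq _)).mpr (pow_le_one₀ hsq.le hsq1)
    · have hn : (((pps y t).toNat : ℕ) : ℤ) = pps y t := Int.toNat_of_nonneg hk.le
      calc (∑ w : Fin M → Bool, if (∃ m, m ≤ M ∧ pps w m ≤ -(pps y t)) then W p q w else 0)
          = (∑ w : Fin M → Bool,
              if (∃ m, m ≤ M ∧ pps w m ≤ -(((pps y t).toNat : ℕ) : ℤ)) then W p q w else 0) := by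
            rw [hn]
        _ ≤ (q / p) ^ ((pps y t).toNat) := comb1 hp hq hpq M _
        _ = sq ^ ((pps y t).toNat) * sq ^ ((pps y t).toNat) := by rw [hr, mul_pow]
        _ ≤ sq ^ ((pps y t).toNat) * 1 :=
            mul_le_mul_of_nonneg_left (pow_le_one₀ hsq.le hsq1) (pow_nonneg hsq.le _)
        _ = sq ^ (pps y t) := by rw [mul_one, ← zpow_natCast, hn]
  calc (∑ y : Fin t → Bool, W p q y *
          (∑ w : Fin M → Bool, if (∃ m, m ≤ M ∧ pps w m ≤ -(pps y t)) then W p q w else 0))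
      ≤ ∑ y : Fin t → Bool, W p q y * sq ^ (pps y t) :=
        Finset.sum_le_sum fun y _ =>
          mul_le_mul_of_nonneg_left (inner_le y) (W_nonneg hp.le hq y)
    _ = (p * sq + q * sq⁻¹) ^ t := comb3 sq hsq t

end
end BWAux

open MeasureTheory ProbabilityTheory

/-- For a `p`-biased random walk with `p > 1/2`, the last time `T` the walk visits its
bottommost point satisfies `P(T ≥ t) ≤ (1 + √2) (4pq)^{t/2}` for every `t : ℕ`, `q = 1-p`. -/
theorem biased_walk_tail_last_min {Ω : Type*} [MeasurableSpace Ω] (μ : Measure Ω)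
    [IsProbabilityMeasure μ] (p q : ℝ) (hp : 1 / 2 < p) (hp1 : p ≤ 1) (hq : q = 1 - p)
    (Z : ℕ → Ω → ℤ) (hmeas : ∀ i, Measurable (Z i))
    (hindep : iIndepFun Z μ)
    (hup : ∀ i, μ {ω | Z i ω = 1} = ENNReal.ofReal p)
    (hdown : ∀ i, μ {ω | Z i ω = -1} = ENNReal.ofReal q)
    (S : Ω → ℕ → ℤ) (hS : ∀ ω t, S ω t = ∑ i ∈ Finset.range t, Z i ω)
    (B : Ω → ℤ) (hB : ∀ ω, B ω = sInf (Set.range (S ω)))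
    (T : Ω → ℕ) (hT : ∀ ω, T ω = sSup {t : ℕ | S ω t = B ω}) (t : ℕ) :
    μ {ω | t ≤ T ω} ≤ ENNReal.ofReal ((1 + Real.sqrt 2) * (4 * p * q) ^ ((t : ℝ) / 2)) := by
  classical
  have hp0 : (0:ℝ) < p := by linarith
  have hq0 : (0:ℝ) ≤ q := by rw [hq]; linarith
  have hS0 : ∀ ω, S ω 0 = 0 := fun ω => by rw [hS]; simp
  have hB0 : ∀ ω, B ω ≤ 0 := by
    intro ω
    by_cases hbb : BddBelow (Set.range (S ω))
    · rw [hB]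
      calc sInf (Set.range (S ω)) ≤ S ω 0 := csInf_le hbb ⟨0, rfl⟩
        _ = 0 := hS0 ω
    · rw [hB, Int.csInf_of_not_bddBelow hbb]
  have hexists : ∀ ω, t ≤ T ω → ∃ s, t ≤ s ∧ S ω s ≤ 0 := by
    intro ω hω
    rcases Nat.eq_zero_or_pos t with h0 | htpos
    · exact ⟨0, by omega, (hS0 ω).le⟩
    · have hT' : t ≤ sSup {u : ℕ | S ω u = B ω} := by rw [← hT]; exact hω
      have hAne : {u : ℕ | S ω u = B ω}.Nonempty := by
        by_contra h
        rw [Set.not_nonempty_iff_eq_empty] at h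
        rw [h, csSup_empty] at hT'
        simp only [Nat.bot_eq_zero] at hT'
        omega
      by_cases hbdd : BddAbove {u : ℕ | S ω u = B ω}
      · have hmem := Nat.sSup_mem hAne hbdd
        exact ⟨sSup {u : ℕ | S ω u = B ω}, hT', le_of_eq_of_le hmem (hB0 ω)⟩
      · obtain ⟨s, hsA, hst⟩ := not_bddAbove_iff.mp hbdd t
        exact ⟨s, hst.le, le_of_eq_of_le hsA (hB0 ω)⟩
  by_cases hp1' : p = 1
  · -- degenerate case q = 0
    have hq00 : q = 0 := by rw [hq, hp1']; ring
    rcases Nat.eq_zero_or_pos t with h0 | htpos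
    · subst h0
      calc μ {ω | 0 ≤ T ω} ≤ 1 := prob_le_one
        _ ≤ ENNReal.ofReal ((1 + Real.sqrt 2) * (4 * p * q) ^ (((0:ℕ) : ℝ) / 2)) := by
            rw [show (((0:ℕ):ℝ) / 2) = (0:ℝ) by norm_num, Real.rpow_zero, mul_one]
            rw [← ENNReal.ofReal_one]
            exact ENNReal.ofReal_le_ofReal (by linarith [Real.sqrt_nonneg 2])
    · have hsub : {ω | t ≤ T ω} ⊆ ⋃ i : ℕ, {ω | Z i ω = 1}ᶜ := by
        intro ω hω
        obtain ⟨s, hts, hle⟩ := hexists ω hω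
        by_contra hnot
        simp only [Set.mem_iUnion, Set.mem_compl_iff, Set.mem_setOf_eq, not_exists,
          not_not] at hnot
        have hsum : S ω s = s := by
          rw [hS]
          simp [hnot]
        omega
      have hzero : ∀ i : ℕ, μ ({ω | Z i ω = 1}ᶜ) = 0 := by
        intro i
        have hm : MeasurableSet {ω | Z i ω = 1} := hmeas i (measurableSet_singleton 1)
        rw [measure_compl hm (measure_ne_top μ _), hup i, hp1', ENNReal.ofReal_one,
          measure_univ, tsub_self]
      calc μ {ω | t ≤ T ω} ≤ μ (⋃ i : ℕ, {ω | Z i ω = 1}ᶜ) := measure_mono hsub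
        _ ≤ ∑' i : ℕ, μ ({ω | Z i ω = 1}ᶜ) := measure_iUnion_le _
        _ = 0 := by simp [hzero]
        _ ≤ _ := zero_le
  · -- main case : 0 < q
    have hplt : p < 1 := lt_of_le_of_ne hp1 hp1'
    have hq0' : (0:ℝ) < q := by rw [hq]; linarith
    set sq := Real.sqrt (q / p) with hsqdef
    have hqp0 : (0:ℝ) ≤ q / p := div_nonneg hq0 hp0.le
    have hsq : 0 < sq := Real.sqrt_pos.mpr (div_pos hq0' hp0)
    have hsq1 : sq ≤ 1 := Real.sqrt_le_one.mpr (by rw [div_le_one hp0]; linarith)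
    have hr : q / p = sq * sq := (Real.mul_self_sqrt hqp0).symm
    have ha0 : 0 < Real.sqrt p := Real.sqrt_pos.mpr hp0
    have hb0 : 0 < Real.sqrt q := Real.sqrt_pos.mpr hq0'
    have hsq_eq : sq = Real.sqrt q / Real.sqrt p := Real.sqrt_div hq0 p
    have hRR : p * sq + q * sq⁻¹ = 2 * (Real.sqrt p * Real.sqrt q) := by
      rw [hsq_eq, inv_div]
      rw [show p * (Real.sqrt q / Real.sqrt p) = (p / Real.sqrt p) * Real.sqrt q by ring,
        show q * (Real.sqrt p / Real.sqrt q) = (q / Real.sqrt q) * Real.sqrt p by ring,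
        Real.div_sqrt, Real.div_sqrt]
      ring
    have h4 : Real.sqrt (4 * p * q) = 2 * (Real.sqrt p * Real.sqrt q) := by
      rw [show (4:ℝ) * p * q = (2:ℝ)^2 * (p * q) by ring,
        Real.sqrt_mul (by norm_num) (p * q), Real.sqrt_sq (by norm_num : (0:ℝ) ≤ 2),
        Real.sqrt_mul hp0.le q]
    have hfinal : ((4 * p * q) : ℝ) ^ ((t : ℝ) / 2) = (p * sq + q * sq⁻¹) ^ t := by
      rw [show ((t:ℝ) / 2) = ((1:ℝ)/2) * ((t : ℕ) : ℝ) by push_cast; ring]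
      rw [Real.rpow_mul (by positivity), Real.rpow_natCast]
      rw [← Real.sqrt_eq_rpow, h4, hRR]
    -- measurability
    have hSmeas : ∀ s, Measurable fun ω => S ω s := by
      intro s
      have : (fun ω => S ω s) = fun ω => ∑ i ∈ Finset.range s, Z i ω :=
        funext fun ω => hS ω s
      rw [this]
      exact Finset.measurable_sum _ fun i _ => hmeas i
    have hFmeas : ∀ N : ℕ, MeasurableSet {ω | ∃ s, t ≤ s ∧ s ≤ N ∧ S ω s ≤ 0} := by
      intro N
      have : {ω | ∃ s, t ≤ s ∧ s ≤ N ∧ S ω s ≤ 0}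
          = ⋃ s ∈ Finset.Icc t N, {ω | S ω s ≤ 0} := by
        ext ω
        simp only [Set.mem_setOf_eq, Set.mem_iUnion, Finset.mem_Icc, exists_prop]
        constructor
        · rintro ⟨s, h1, h2, h3⟩; exact ⟨s, ⟨h1, h2⟩, h3⟩
        · rintro ⟨s, ⟨h1, h2⟩, h3⟩; exact ⟨s, h1, h2, h3⟩
      rw [this]
      refine Set.Finite.measurableSet_biUnion (Finset.finite_toSet _) fun s _ => ?_
      have : {ω | S ω s ≤ 0} = (fun ω => S ω s) ⁻¹' (Set.Iic 0) := rfl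
      rw [this]
      exact hSmeas s MeasurableSpace.measurableSet_top
    have hsub2 : {ω | t ≤ T ω} ⊆ ⋃ M : ℕ, {ω | ∃ s, t ≤ s ∧ s ≤ t + M ∧ S ω s ≤ 0} := by
      intro ω hω
      obtain ⟨s, h1, h2⟩ := hexists ω hω
      exact Set.mem_iUnion.mpr ⟨s - t, ⟨s, h1, by omega, h2⟩⟩
    have hmono : Monotone fun M : ℕ => {ω | ∃ s, t ≤ s ∧ s ≤ t + M ∧ S ω s ≤ 0} := by
      intro a b hab ω
      rintro ⟨s, h1, h2, h3⟩
      exact ⟨s, h1, by omega, h3⟩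
    have hkey : ∀ M : ℕ, μ {ω | ∃ s, t ≤ s ∧ s ≤ t + M ∧ S ω s ≤ 0}
        ≤ ENNReal.ofReal ((p * sq + q * sq⁻¹) ^ t) := by
      intro M
      set N := t + M with hN
      set v : (Fin N → Bool) → ℕ → ℤ := fun z i =>
        if h : i < N then BWAux.stepVal (z ⟨i, h⟩) else 0 with hv
      set Cyl : (Fin N → Bool) → Set Ω := fun z =>
        ⋂ i ∈ Finset.range N, Z i ⁻¹' {v z i} with hCyl
      set Q : (Fin N → Bool) → Prop := fun z => ∃ s, t ≤ s ∧ s ≤ N ∧ BWAux.pps z s ≤ 0 with hQ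
      have hcover : {ω | ∃ s, t ≤ s ∧ s ≤ t + M ∧ S ω s ≤ 0}
          ⊆ (⋃ i ∈ Finset.range N, {ω | Z i ω ≠ 1 ∧ Z i ω ≠ -1}) ∪
            (⋃ z ∈ Finset.univ.filter Q, Cyl z) := by
        intro ω hωF
        by_cases hgood : ∀ i, i < N → (Z i ω = 1 ∨ Z i ω = -1)
        · right
          set z : Fin N → Bool := fun i => if Z (i : ℕ) ω = 1 then true else false with hz
          have hzval : ∀ i : Fin N, BWAux.stepVal (z i) = Z (i : ℕ) ω := by
            intro i
            rcases hgood i i.isLt with h | h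
            · simp [hz, h, BWAux.stepVal]
            · have h1 : ¬ (Z (i:ℕ) ω = 1) := by rw [h]; decide
              simp [hz, h, h1, BWAux.stepVal]
          have hQz : Q z := by
            obtain ⟨s, h1, h2, h3⟩ := hωF
            refine ⟨s, h1, h2, ?_⟩
            have hpz : BWAux.pps z s = S ω s := by
              rw [hS]
              unfold BWAux.pps
              simp only [hzval]
              rw [Fin.sum_univ_eq_sum_range (fun i => if i < s then Z i ω else 0) N]
              rw [← Finset.sum_subset (Finset.range_subset_range.mpr h2)
                (fun x _ hxs => if_neg (by simpa using hxs))]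
              exact Finset.sum_congr rfl fun x hx => if_pos (Finset.mem_range.mp hx)
            rw [hpz]
            exact h3
          refine Set.mem_biUnion (Finset.mem_filter.mpr ⟨Finset.mem_univ z, hQz⟩) ?_
          simp only [hCyl, Set.mem_iInter]
          intro i hi
          have hiN : i < N := Finset.mem_range.mp hi
          simp only [Set.mem_preimage, Set.mem_singleton_iff, hv]
          rw [dif_pos hiN]
          exact (hzval ⟨i, hiN⟩).symm
        · left
          push_neg at hgood
          obtain ⟨i, hiN, hi1, hi2⟩ := hgood
          exact Set.mem_biUnion (Finset.mem_range.mpr hiN) ⟨hi1, hi2⟩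
      have hbadzero : ∀ i : ℕ, μ {ω | Z i ω ≠ 1 ∧ Z i ω ≠ -1} = 0 := by
        intro i
        have hm1 : MeasurableSet {ω | Z i ω = 1} := hmeas i (measurableSet_singleton 1)
        have hm2 : MeasurableSet {ω | Z i ω = -1} := hmeas i (measurableSet_singleton (-1))
        have hdisj : Disjoint {ω | Z i ω = 1} {ω | Z i ω = -1} := by
          rw [Set.disjoint_left]
          rintro ω h1 h2
          simp only [Set.mem_setOf_eq] at h1 h2
          omega
        have hun : μ ({ω | Z i ω = 1} ∪ {ω | Z i ω = -1}) = 1 := by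
          rw [measure_union hdisj hm2, hup i, hdown i, ← ENNReal.ofReal_add hp0.le hq0,
            show p + q = 1 by rw [hq]; ring, ENNReal.ofReal_one]
        have hce : {ω | Z i ω ≠ 1 ∧ Z i ω ≠ -1} = ({ω | Z i ω = 1} ∪ {ω | Z i ω = -1})ᶜ := by
          ext ω
          simp [not_or]
        rw [hce, measure_compl (hm1.union hm2) (measure_ne_top μ _), hun, measure_univ, tsub_self]
      have hcylval : ∀ z : Fin N → Bool, μ (Cyl z) = ENNReal.ofReal (BWAux.W p q z) := by
        intro z
        rw [hCyl]
        simp only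
        rw [hindep.meas_biInter (fun i _ => ⟨{v z i}, measurableSet_singleton _, rfl⟩)]
        have hfac : ∀ i ∈ Finset.range N, μ (Z i ⁻¹' {v z i})
            = ENNReal.ofReal (if h : i < N then BWAux.wt p q (z ⟨i, h⟩) else 1) := by
          intro i hi
          have hiN : i < N := Finset.mem_range.mp hi
          rw [dif_pos hiN]
          have hvz : v z i = BWAux.stepVal (z ⟨i, hiN⟩) := dif_pos hiN
          rw [hvz]
          cases hzb : z ⟨i, hiN⟩
          · have : Z i ⁻¹' {BWAux.stepVal false} = {ω | Z i ω = -1} := by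
              ext ω; simp [BWAux.stepVal]
            rw [this, hdown i]
            simp [BWAux.wt]
          · have : Z i ⁻¹' {BWAux.stepVal true} = {ω | Z i ω = 1} := by
              ext ω; simp [BWAux.stepVal]
            rw [this, hup i]
            simp [BWAux.wt]
        rw [Finset.prod_congr rfl hfac,
          ← ENNReal.ofReal_prod_of_nonneg (fun i _ => by
            split
            · exact BWAux.wt_nonneg hp0.le hq0 _
            · norm_num)]
        congr 1
        rw [← Fin.prod_univ_eq_prod_range (fun i => if h : i < N then BWAux.wt p q (z ⟨i, h⟩) else 1) N]
        unfold BWAux.W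
        exact Finset.prod_congr rfl fun i _ => by rw [dif_pos i.isLt]
      calc μ {ω | ∃ s, t ≤ s ∧ s ≤ t + M ∧ S ω s ≤ 0}
          ≤ μ ((⋃ i ∈ Finset.range N, {ω | Z i ω ≠ 1 ∧ Z i ω ≠ -1}) ∪
              (⋃ z ∈ Finset.univ.filter Q, Cyl z)) := measure_mono hcover
        _ ≤ μ (⋃ i ∈ Finset.range N, {ω | Z i ω ≠ 1 ∧ Z i ω ≠ -1}) +
            μ (⋃ z ∈ Finset.univ.filter Q, Cyl z) := measure_union_le _ _
        _ = μ (⋃ z ∈ Finset.univ.filter Q, Cyl z) := by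
            have h0 : μ (⋃ i ∈ Finset.range N, {ω | Z i ω ≠ 1 ∧ Z i ω ≠ -1}) = 0 :=
              (measure_biUnion_null_iff (Finset.range N).countable_toSet).mpr
                fun i _ => hbadzero i
            rw [h0, zero_add]
        _ ≤ ∑ z ∈ Finset.univ.filter Q, μ (Cyl z) := measure_biUnion_finset_le _ _
        _ = ENNReal.ofReal (∑ z ∈ Finset.univ.filter Q, BWAux.W p q z) := by
            rw [ENNReal.ofReal_sum_of_nonneg (fun z _ => BWAux.W_nonneg hp0.le hq0 z)]
            exact Finset.sum_congr rfl fun z _ => hcylval z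
        _ ≤ ENNReal.ofReal ((p * sq + q * sq⁻¹) ^ t) := by
            apply ENNReal.ofReal_le_ofReal
            rw [Finset.sum_filter]
            exact BWAux.mainComb hp0 hq0 (by rw [hq]; ring) sq hsq hsq1 hr t M
    calc μ {ω | t ≤ T ω}
        ≤ μ (⋃ M : ℕ, {ω | ∃ s, t ≤ s ∧ s ≤ t + M ∧ S ω s ≤ 0}) := measure_mono hsub2
      _ = ⨆ M : ℕ, μ {ω | ∃ s, t ≤ s ∧ s ≤ t + M ∧ S ω s ≤ 0} := hmono.measure_iUnion
      _ ≤ ENNReal.ofReal ((p * sq + q * sq⁻¹) ^ t) := iSup_le hkey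
      _ ≤ ENNReal.ofReal ((1 + Real.sqrt 2) * (4 * p * q) ^ ((t : ℝ) / 2)) := by
          apply ENNReal.ofReal_le_ofReal
          rw [hfinal]
          have h0 : (0:ℝ) ≤ (p * sq + q * sq⁻¹) ^ t := by positivity
          nlinarith [Real.sqrt_nonneg 2]
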